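/- Let φ be a 2-CNF with variable set vars(φ) of size n and clause set of size m (every clause has exactly two literals), and let G be the undirected graph with vertex set {x⁺, x⁻ : x ∈ vars(φ)}, with an edge {x⁺, x⁻} for every variable x and, for every clause, an edge between the two vertices corresponding to its literals (where literal x corresponds to x⁺ and literal ¬x to x⁻). Then, for every k ≥ 0, one can delete at most k variables from φ (removing all clauses containing a deleted variable) so that the remaining formula is satisfiable, if and only if G has a vertex cover of size at most n + k. -/

import Mathlib

/-- For a 2-CNF `φ` with variable set `Vφ` of size `n`, consider the
graph on the literal vertices `(x, true) = x⁺` and `(x, false) = x⁻` (for `x ∈ Vφ`)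
with the matching edges `{x⁺, x⁻}` and, for every clause, an edge between the
vertices of its two literals.  Then one can delete at most `k` variables (removing
all clauses containing them) so that the rest of `φ` is satisfiable iff this graph
has a vertex cover of size at most `n + k`.  A vertex cover is a set `S` of literal
vertices meeting every matching edge and every clause edge. -/
theorem variable_deletion_2sat_iff_vc_above_matching
    (φ : Multiset (Finset (ℕ × Bool))) (h2 : ∀ C ∈ φ, C.card = 2)
    (Vφ : Finset ℕ) (hV : ∀ x : ℕ, x ∈ Vφ ↔ ∃ C ∈ φ, ∃ l ∈ C, l.1 = x)
    (k : ℕ) :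
    (∃ D : Finset ℕ, D ⊆ Vφ ∧ D.card ≤ k ∧
      ∃ β : ℕ → Bool, ∀ C ∈ φ, (∀ l ∈ C, l.1 ∉ D) → ∃ l ∈ C, β l.1 = l.2) ↔
    (∃ S : Finset (ℕ × Bool),
      (∀ p ∈ S, p.1 ∈ Vφ) ∧
      (∀ x ∈ Vφ, (x, true) ∈ S ∨ (x, false) ∈ S) ∧
      (∀ C ∈ φ, ∃ l ∈ C, l ∈ S) ∧
      S.card ≤ Vφ.card + k) := by
  constructor
  · rintro ⟨D, hDsub, hDk, β, hβ⟩
    refine ⟨D.biUnion (fun x => {(x, true), (x, false)}) ∪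
      (Vφ \ D).image (fun x => (x, β x)), ?_, ?_, ?_, ?_⟩
    · intro p hp
      rcases Finset.mem_union.1 hp with h | h
      · obtain ⟨x, hx, hpx⟩ := Finset.mem_biUnion.1 h
        simp only [Finset.mem_insert, Finset.mem_singleton] at hpx
        rcases hpx with rfl | rfl <;> exact hDsub hx
      · obtain ⟨x, hx, rfl⟩ := Finset.mem_image.1 h
        exact (Finset.mem_sdiff.1 hx).1
    · intro x hx
      by_cases hxD : x ∈ D
      · left; exact Finset.mem_union_left _ (Finset.mem_biUnion.2 ⟨x, hxD, by simp⟩)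
      · have hmem : (x, β x) ∈ (Vφ \ D).image (fun x => (x, β x)) :=
          Finset.mem_image.2 ⟨x, Finset.mem_sdiff.2 ⟨hx, hxD⟩, rfl⟩
        cases hb : β x
        · right; rw [hb] at hmem; exact Finset.mem_union_right _ hmem
        · left; rw [hb] at hmem; exact Finset.mem_union_right _ hmem
    · intro C hC
      by_cases h : ∃ l ∈ C, l.1 ∈ D
      · obtain ⟨l, hl, hlD⟩ := h
        refine ⟨l, hl, Finset.mem_union_left _ (Finset.mem_biUnion.2 ⟨l.1, hlD, ?_⟩)⟩
        rcases l with ⟨x, b⟩; cases b <;> simp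
      · push_neg at h
        obtain ⟨l, hl, hβl⟩ := hβ C hC h
        refine ⟨l, hl, Finset.mem_union_right _ (Finset.mem_image.2
          ⟨l.1, Finset.mem_sdiff.2 ⟨(hV l.1).2 ⟨C, hC, l, hl, rfl⟩, h l hl⟩, ?_⟩)⟩
        rw [hβl]
    · have h1 := Finset.card_union_le (D.biUnion (fun x => ({(x, true), (x, false)} : Finset (ℕ × Bool))))
        ((Vφ \ D).image (fun x => (x, β x)))
      have h2 := Finset.card_biUnion_le (s := D) (t := fun x => ({(x, true), (x, false)} : Finset (ℕ × Bool)))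
      have h3 := Finset.card_image_le (s := Vφ \ D) (f := fun x => (x, β x))
      have h4 : (Vφ \ D).card = Vφ.card - D.card := Finset.card_sdiff_of_subset hDsub
      have h5 : D.card ≤ Vφ.card := Finset.card_le_card hDsub
      have h6 : ∑ x ∈ D, ({(x, true), (x, false)} : Finset (ℕ × Bool)).card = D.card * 2 := by
        rw [Finset.sum_congr rfl (fun x _ => ?_), Finset.sum_const, smul_eq_mul]
        simp
      omega
  · rintro ⟨S, hS1, hS2, hS3, hS4⟩
    set D := Vφ.filter (fun x => (x, true) ∈ S ∧ (x, false) ∈ S) with hDdef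
    refine ⟨D, Finset.filter_subset _ _, ?_, fun x => decide ((x, true) ∈ S), ?_⟩
    · have hfib : S.card = ∑ x ∈ Vφ, (S.filter (fun p => p.1 = x)).card :=
        Finset.card_eq_sum_card_fiberwise hS1
      have hbd : ∀ x ∈ Vφ, (if x ∈ D then 2 else 1) ≤ (S.filter (fun p => p.1 = x)).card := by
        intro x hx
        by_cases hxD : x ∈ D
        · simp only [if_pos hxD]
          have hD := Finset.mem_filter.1 hxD
          have hsub : ({(x, true), (x, false)} : Finset (ℕ × Bool)) ⊆
              S.filter (fun p => p.1 = x) := by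
            intro p hp
            simp only [Finset.mem_insert, Finset.mem_singleton] at hp
            rcases hp with rfl | rfl <;>
              exact Finset.mem_filter.2 ⟨by tauto, rfl⟩
          have := Finset.card_le_card hsub
          simpa using this
        · simp only [if_neg hxD]
          rcases hS2 x hx with h | h
          · exact Finset.card_pos.2 ⟨(x, true), Finset.mem_filter.2 ⟨h, rfl⟩⟩
          · exact Finset.card_pos.2 ⟨(x, false), Finset.mem_filter.2 ⟨h, rfl⟩⟩
      have hsum : ∑ x ∈ Vφ, (if x ∈ D then 2 else 1) ≤ S.card :=
        hfib ▸ Finset.sum_le_sum hbd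
      have heq : ∑ x ∈ Vφ, (if x ∈ D then 2 else 1) = Vφ.card + D.card := by
        have hcongr : ∀ x ∈ Vφ, (if x ∈ D then 2 else 1) = 1 + (if x ∈ D then 1 else 0) := by
          intro x _; split <;> rfl
        rw [Finset.sum_congr rfl hcongr, Finset.sum_add_distrib, Finset.sum_const,
          Finset.sum_ite_mem, Finset.inter_eq_right.2 (Finset.filter_subset _ _),
          Finset.sum_const]
        simp
        rfl
      omega
    · intro C hC hnotD
      obtain ⟨l, hl, hlS⟩ := hS3 C hC
      have hx : l.1 ∈ Vφ := (hV l.1).2 ⟨C, hC, l, hl, rfl⟩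
      have hxD := hnotD l hl
      refine ⟨l, hl, ?_⟩
      rcases l with ⟨x, b⟩
      cases b
      · simp only [decide_eq_false_iff_not]
        intro ht
        exact hxD (Finset.mem_filter.2 ⟨hx, ht, hlS⟩)
      · simp only [decide_eq_true_eq]
        exact hlS
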